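/- For any positive integer d, the polynomial f_d(z) = z^{d+1} + z − 1 has a unique positive real root w_d, this root lies in the open interval (0,1), and every other complex root of f_d has modulus strictly greater than w_d. -/

import Mathlib

theorem fd_smallest_root (d : ℕ) (hd : 0 < d) :
    ∃ w : ℝ, 0 < w ∧ w < 1 ∧ w ^ (d + 1) + w - 1 = 0 ∧
      (∀ x : ℝ, 0 < x → x ^ (d + 1) + x - 1 = 0 → x = w) ∧
      ∀ z : ℂ, z ^ (d + 1) + z - 1 = 0 → z ≠ (w : ℂ) → w < ‖z‖ := by
  set f : ℝ → ℝ := fun x => x ^ (d + 1) + x - 1 with hf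
  have hmono : ∀ a b : ℝ, 0 ≤ a → a < b → f a < f b := by
    intro a b ha hab
    have : a ^ (d + 1) < b ^ (d + 1) := pow_lt_pow_left₀ hab ha (Nat.succ_ne_zero d)
    simp only [hf]
    linarith
  have hcont : ContinuousOn f (Set.Icc (0:ℝ) 1) := by
    apply Continuous.continuousOn; continuity
  have h0 : f 0 = -1 := by simp [hf]
  have h1 : f 1 = 1 := by simp [hf]
  have hivt := intermediate_value_Ioo (a := (0:ℝ)) (b := 1) zero_le_one hcont
  have h0mem : (0:ℝ) ∈ Set.Ioo (f 0) (f 1) := by rw [h0, h1]; constructor <;> norm_num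
  obtain ⟨w, hwmem, hw0⟩ := hivt h0mem
  simp only [hf] at hw0
  have hwpos : 0 < w := hwmem.1
  have hw1 : w < 1 := hwmem.2
  have huniq : ∀ x : ℝ, 0 < x → x ^ (d + 1) + x - 1 = 0 → x = w := by
    intro x hx hfx
    rcases lt_trichotomy x w with h | h | h
    · exfalso; have := hmono x w hx.le h; simp only [hf] at this; linarith
    · exact h
    · exfalso; have := hmono w x hwpos.le h; simp only [hf] at this; linarith
  refine ⟨w, hwpos, hw1, hw0, huniq, ?_⟩
  intro z hz hzw
  by_contra hle
  push_neg at hle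
  have hsum : z ^ (d + 1) + z = 1 := by linear_combination hz
  have habs1 : ‖z ^ (d + 1) + z‖ = 1 := by rw [hsum]; simp
  set r := ‖z‖ with hr
  have hr0 : 0 ≤ r := norm_nonneg z
  have htri : (1:ℝ) ≤ r ^ (d + 1) + r := by
    calc (1:ℝ) = ‖z ^ (d + 1) + z‖ := habs1.symm
    _ ≤ ‖z ^ (d + 1)‖ + ‖z‖ := norm_add_le _ _
    _ = r ^ (d + 1) + r := by rw [norm_pow]
  have hwone : w ^ (d + 1) + w = 1 := by linarith
  have hrw : r = w := by
    rcases lt_or_eq_of_le hle with h | h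
    · exfalso; have := hmono r w hr0 h; simp only [hf] at this; linarith
    · exact h
  have heq : ‖z ^ (d + 1) + z‖ = ‖z ^ (d + 1)‖ + ‖z‖ := by
    have : ‖z ^ (d + 1)‖ + ‖z‖ = 1 := by
      rw [norm_pow, ← hr, hrw, hwone]
    rw [habs1, this]
  have hray : SameRay ℝ (z ^ (d + 1)) z := by
    rw [sameRay_iff_norm_add]
    simpa using heq
  have habsz : ‖z‖ = w := hr ▸ hrw
  have hz0 : z ≠ 0 := by
    intro h
    rw [h, norm_zero] at habsz
    exact hwpos.ne habsz
  obtain ⟨t, ht0, htz⟩ := (exists_nonneg_left_iff_sameRay (R := ℝ) hz0).2 hray.symm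
  -- htz : t • z = z ^ (d+1)
  have hzeq : z * (1 + (t:ℂ)) = 1 := by
    have : (t:ℂ) * z = z ^ (d + 1) := by
      simpa [Complex.real_smul] using htz
    linear_combination hsum + this
  have h1t : (1:ℝ) + t > 0 := by linarith
  have hzval : z = ((1 + t)⁻¹ : ℝ) := by
    have h1tc : (1:ℂ) + (t:ℂ) ≠ 0 := by
      have := Complex.ofReal_ne_zero.mpr h1t.ne'
      push_cast at this
      exact this
    push_cast
    field_simp [h1tc]
    linear_combination hzeq
  set x : ℝ := (1 + t)⁻¹ with hx
  have hxpos : 0 < x := inv_pos.2 h1t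
  have hxroot : x ^ (d + 1) + x - 1 = 0 := by
    have : ((x:ℂ)) ^ (d + 1) + (x:ℂ) - 1 = 0 := by rw [← hzval]; exact hz
    exact_mod_cast this
  have := huniq x hxpos hxroot
  exact hzw (by rw [hzval, this])
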